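/- Let G be a topological group and A a compact G-group with a presentation A = lim_r A_r as the inverse limit of an inverse system {A_r, φ_{rt}} over a directed poset R of compact Hausdorff G-groups with continuous G-equivariant transition homomorphisms, with projections φ_r : A → A_r. If a, b ∈ Z¹_cts(G,A)_po are continuous cocycles such that for every r ∈ R the cocycles φ_r ∘ a and φ_r ∘ b are cohomologous in Z¹_cts(G,A_r)_po, then a and b are cohomologous in Z¹_cts(G,A)_po; that is, the map Θ : H¹_cts(G,A)_po → lim_r H¹_cts(G,A_r)_po, [a] ↦ ([φ_r ∘ a])_r, is injective. -/

import Mathlib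

section Setup

variable {G : Type} [Group G] [TopologicalSpace G]
variable {R : Type} [PartialOrder R]
variable {Ar : R → Type} [∀ r, Group (Ar r)] [∀ r, TopologicalSpace (Ar r)]

/-- The inverse limit `A = {(x_r) ∈ ∏ A_r | φ_{rt}(x_r) = x_t}` of the system, with
the subspace topology of the product topology (its group operations and `G`-action
are coordinatewise). -/
abbrev InvLim (φ : ∀ ⦃r t : R⦄, t ≤ r → Ar r → Ar t) : Type :=
  {x : ∀ r, Ar r // ∀ (r t : R) (h : t ≤ r), φ h (x r) = x t}

/-- `Z¹_cts(G, lim A_r)_po`: continuous 1-cocycles of `G` in the inverse limit (the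
cocycle identity stated coordinatewise), with the point-open topology. -/
abbrev Z1Lim (acr : ∀ r, G → Ar r → Ar r) (φ : ∀ ⦃r t : R⦄, t ≤ r → Ar r → Ar t) :
    Type :=
  {a : G → InvLim φ // Continuous a ∧
    ∀ (s t : G) (r : R), (a (s * t)).val r = (a s).val r * acr r s ((a t).val r)}

end Setup

/-- With `A = lim_r A_r` a compact `G`-group presented as an inverse
limit of compact Hausdorff `G`-groups, if two continuous cocycles `a, b` of `G` in
`A` are such that `φ_r ∘ a` and `φ_r ∘ b` are cohomologous in `Z¹_cts(G,A_r)_po` for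
every `r`, then `a` and `b` are cohomologous in `Z¹_cts(G,A)_po`; that is, the map
`Θ : H¹_cts(G,A)_po → lim_r H¹_cts(G,A_r)_po` is injective. -/
theorem stmt_11
    {G : Type} [Group G] [TopologicalSpace G] [IsTopologicalGroup G]
    {R : Type} [PartialOrder R] [IsDirected R (· ≤ ·)]
    (Ar : R → Type) [∀ r, Group (Ar r)] [∀ r, TopologicalSpace (Ar r)]
    [∀ r, IsTopologicalGroup (Ar r)] [∀ r, T2Space (Ar r)] [∀ r, CompactSpace (Ar r)]
    (acr : ∀ r, G → Ar r → Ar r)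
    (hacr : ∀ r, Continuous fun p : G × Ar r => acr r p.1 p.2)
    (honer : ∀ r (x : Ar r), acr r 1 x = x)
    (hcompr : ∀ r (s t : G) (x : Ar r), acr r (s * t) x = acr r s (acr r t x))
    (hdistr : ∀ r (s : G) (x y : Ar r), acr r s (x * y) = acr r s x * acr r s y)
    (φ : ∀ ⦃r t : R⦄, t ≤ r → Ar r → Ar t)
    (hφcont : ∀ (r t : R) (h : t ≤ r), Continuous (φ h))
    (hφid : ∀ r : R, φ (le_refl r) = id)
    (hφcomp : ∀ (r t u : R) (h1 : u ≤ t) (h2 : t ≤ r) (x : Ar r),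
      φ h1 (φ h2 x) = φ (h1.trans h2) x)
    (hφmul : ∀ (r t : R) (h : t ≤ r) (x y : Ar r), φ h (x * y) = φ h x * φ h y)
    (hφequiv : ∀ (r t : R) (h : t ≤ r) (s : G) (x : Ar r),
      φ h (acr r s x) = acr t s (φ h x))
    -- `A` is a compact `G`-group
    (hAcomp : CompactSpace (InvLim φ))
    (a b : Z1Lim acr φ)
    -- `φ_r ∘ a` and `φ_r ∘ b` are cohomologous in `Z¹_cts(G,A_r)_po` for every `r`
    (hcoh : ∀ r : R, ∃ x : Ar r, ∀ s : G,
      (b.val s).val r = x⁻¹ * (a.val s).val r * acr r s x) :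
    -- `a` and `b` are cohomologous in `Z¹_cts(G,A)_po`
    ∃ x : InvLim φ, ∀ (s : G) (r : R),
      (b.val s).val r = (x.val r)⁻¹ * (a.val s).val r * acr r s (x.val r) := by
    classical
  -- the set of "good" coboundary elements at level r
  set S : ∀ r, Set (Ar r) := fun r =>
    {x | ∀ s : G, (b.val s).val r = x⁻¹ * (a.val s).val r * acr r s x} with hS
  have hφone : ∀ (r t : R) (h : t ≤ r), φ h (1 : Ar r) = 1 := by
    intro r t h
    have := hφmul r t h 1 1
    rw [mul_one] at this
    exact mul_eq_left.mp this.symm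
  have hφinv : ∀ (r t : R) (h : t ≤ r) (x : Ar r), φ h x⁻¹ = (φ h x)⁻¹ := by
    intro r t h x
    have : φ h x⁻¹ * φ h x = 1 := by rw [← hφmul, inv_mul_cancel, hφone]
    exact eq_inv_of_mul_eq_one_left this
  -- S is mapped into S by transition maps
  have hSmap : ∀ (r t : R) (h : t ≤ r) (x : Ar r), x ∈ S r → φ h x ∈ S t := by
    intro r t h x hx s
    have := congrArg (φ h) (hx s)
    rwa [(b.val s).property r t h, hφmul, hφmul, hφinv, hφequiv,
      (a.val s).property r t h] at this
  -- index type of closed conditions on ∏ Ar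
  have hSclosed : ∀ r, IsClosed (S r) := by
    intro r
    have : S r = ⋂ s : G, {x : Ar r | (b.val s).val r = x⁻¹ * (a.val s).val r * acr r s x} := by
      ext x; simp [hS, Set.mem_iInter]
    rw [this]
    refine isClosed_iInter fun s => isClosed_eq continuous_const ?_
    exact ((continuous_inv.mul continuous_const).mul
      ((hacr r).comp (continuous_const.prodMk continuous_id)))
  let ι : Type := {p : R × R // p.2 ≤ p.1} ⊕ R
  let Z : ι → Set (∀ r, Ar r) := fun i =>
    match i with
    | Sum.inl ⟨(r, t), h⟩ => {x | φ h (x r) = x t}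
    | Sum.inr r => {x | x r ∈ S r}
  have hZclosed : ∀ i, IsClosed (Z i) := by
    rintro (⟨⟨r, t⟩, h⟩ | r)
    · exact isClosed_eq ((hφcont r t h).comp (continuous_apply r)) (continuous_apply t)
    · exact (hSclosed r).preimage (continuous_apply r)
  have key : (Set.univ ∩ ⋂ i, Z i).Nonempty := by
    refine isCompact_univ.inter_iInter_nonempty Z hZclosed ?_
    intro F
    simp only [Set.univ_inter]
    -- collect all indices appearing in F
    set idx : ι → Finset R := fun i =>
      match i with
      | Sum.inl ⟨(r, t), _⟩ => {r, t}
      | Sum.inr r => {r}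
    set T : Finset R := F.biUnion idx with hT
    rcases T.eq_empty_or_nonempty with hTe | hTne
    · -- then F is empty
      have hFe : F = ∅ := by
        by_contra hne
        obtain ⟨i, hi⟩ := Finset.nonempty_iff_ne_empty.mpr hne
        have : idx i ≠ ∅ := by
          rcases i with ⟨⟨r, t⟩, h⟩ | r <;> simp [idx]
        obtain ⟨r, hr⟩ := Finset.nonempty_iff_ne_empty.mpr this
        have : r ∈ T := Finset.mem_biUnion.mpr ⟨i, hi, hr⟩
        simp [hTe] at this
      subst hFe
      exact ⟨fun r => 1, by simp⟩
    · obtain ⟨r0, hr0⟩ := hTne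
      have : Nonempty R := ⟨r0⟩
      obtain ⟨u, hu⟩ := T.exists_le
      -- upgrade u: elements of T are ≤ some common bound; pick c ∈ S u
      obtain ⟨c, hc⟩ := hcoh u
      have hcS : c ∈ S u := hc
      refine ⟨fun r => if h : r ≤ u then φ h c else 1, ?_⟩
      rw [Set.mem_iInter₂]
      intro i hi
      rcases i with ⟨⟨r, t⟩, h⟩ | r
      · have hrT : r ∈ T := Finset.mem_biUnion.mpr ⟨_, hi, by simp [idx]⟩
        have htT : t ∈ T := Finset.mem_biUnion.mpr ⟨_, hi, by simp [idx]⟩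
        have hru : r ≤ u := hu r hrT
        have htu : t ≤ u := hu t htT
        show φ h (if h : r ≤ u then φ h c else 1) = (if h : t ≤ u then φ h c else 1)
        rw [dif_pos hru, dif_pos htu, hφcomp]
      · have hrT : r ∈ T := Finset.mem_biUnion.mpr ⟨_, hi, by simp [idx]⟩
        have hru : r ≤ u := hu r hrT
        show (if h : r ≤ u then φ h c else 1) ∈ S r
        rw [dif_pos hru]
        exact hSmap u r hru c hcS
  obtain ⟨x, -, hx⟩ := key
  rw [Set.mem_iInter] at hx
  refine ⟨⟨x, fun r t h => hx (Sum.inl ⟨(r, t), h⟩)⟩, fun s r => ?_⟩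
  exact hx (Sum.inr r) s
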